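/- Let p be an odd prime. On the polynomial ring 𝔽_p[X_1,…,X_p] over the field 𝔽_p = ℤ/p, let D̄ be the unique derivation with D̄(X_1) = 0 and D̄(X_k) = (1−k)·X_{k−1} for 2 ≤ k ≤ p, and grade the ring by assigning X_k the weight k. Then the image under D̄ of the 𝔽_p-submodule of weighted-homogeneous polynomials of weighted degree p+1 is exactly the 𝔽_p-span of the weighted-degree-p monomials other than X_p; equivalently, a weighted-homogeneous polynomial f of weighted degree p lies in D̄(weighted degree p+1 part) if and only if the coefficient of the monomial X_p in f is zero. -/

import Mathlib

open MvPolynomial Finsupp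

namespace AuxModpDeriv

variable {p : ℕ}

def pre (i : Fin p) : Fin p := ⟨i.val - 1, lt_of_le_of_lt (Nat.sub_le i.val 1) i.isLt⟩

noncomputable def wt (d : Fin p →₀ ℕ) : ℕ :=
  Finsupp.weight (fun j : Fin p => j.val + 1) d

lemma wt_add (a b : Fin p →₀ ℕ) : wt (a + b) = wt a + wt b := map_add _ _ _

lemma wt_single (i : Fin p) (a : ℕ) : wt (Finsupp.single i a) = a * (i.val + 1) := by
  simp [wt, Finsupp.weight_apply, Finsupp.sum_single_index, smul_eq_mul]

def mf (p i : ℕ) : ℕ := i * (2 * p - i)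

noncomputable def meas (d : Fin p →₀ ℕ) : ℕ := d.sum fun i a => a * mf p i.val

lemma meas_add (a b : Fin p →₀ ℕ) : meas (a + b) = meas a + meas b :=
  Finsupp.sum_add_index' (fun _ => zero_mul _) (fun _ _ _ => add_mul _ _ _)

lemma meas_single (i : Fin p) (a : ℕ) : meas (Finsupp.single i a) = a * mf p i.val :=
  Finsupp.sum_single_index (zero_mul _)

lemma mf_lt {i k : ℕ} (hi : 1 ≤ i) (hik : i ≤ k) (hk : k + 1 ≤ p - 1) (hp2 : 2 ≤ p) :
    mf p (k + 1) + mf p (i - 1) < mf p i + mf p k := by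
  unfold mf
  have h1 : k + 1 ≤ 2 * p := by omega
  have h2 : i - 1 ≤ 2 * p := by omega
  have h3 : i ≤ 2 * p := by omega
  have h4 : k ≤ 2 * p := by omega
  zify [h1, h2, h3, h4]
  have h5 : (i:ℤ) - 1 = ((i - 1 : ℕ) : ℤ) := by omega
  nlinarith [h5]

lemma sub_add_cancel_of_pos {d : Fin p →₀ ℕ} {i : Fin p} (h : d i ≠ 0) :
    d - Finsupp.single i 1 + Finsupp.single i 1 = d :=
  tsub_add_cancel_of_le (Finsupp.single_le_iff.2 (Nat.one_le_iff_ne_zero.2 h))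

lemma wt_move {d : Fin p →₀ ℕ} {i : Fin p} (h0 : i.val ≠ 0) (h : d i ≠ 0) :
    wt (d - Finsupp.single i 1 + Finsupp.single (pre i) 1) + 1 = wt d := by
  have hd := sub_add_cancel_of_pos h
  have h1 : wt d = wt (d - Finsupp.single i 1) + (i.val + 1) := by
    conv_lhs => rw [← hd]
    rw [wt_add, wt_single, one_mul]
  rw [wt_add, wt_single, one_mul, h1]
  have : (pre i).val = i.val - 1 := rfl
  omega

lemma move_ne_top {d : Fin p →₀ ℕ} {i : Fin p} (hp2 : 2 ≤ p) (h0 : i.val ≠ 0) :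
    d - Finsupp.single i 1 + Finsupp.single (pre i) 1
      ≠ Finsupp.single (⟨p - 1, Nat.sub_lt (by omega) Nat.one_pos⟩ : Fin p) 1 := by
  intro hEq
  have h2 : (pre i) ≠ (⟨p - 1, Nat.sub_lt (by omega) Nat.one_pos⟩ : Fin p) := by
    apply Fin.ne_of_val_ne
    have := i.isLt
    show i.val - 1 ≠ p - 1
    omega
  have h1 : Finsupp.single (⟨p - 1, Nat.sub_lt (by omega) Nat.one_pos⟩ : Fin p) (1 : ℕ) (pre i)
      = 0 := Finsupp.single_eq_of_ne' (Ne.symm h2)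
  rw [← hEq, Finsupp.add_apply, Finsupp.single_eq_same] at h1
  omega

lemma wt_term_le (d : Fin p →₀ ℕ) (i : Fin p) : d i * (i.val + 1) ≤ wt d := by
  have h : Finsupp.single i (d i) ≤ d := by
    rw [Finsupp.single_le_iff]
  have hd : d - Finsupp.single i (d i) + Finsupp.single i (d i) = d :=
    tsub_add_cancel_of_le h
  calc d i * (i.val + 1) = wt (Finsupp.single i (d i)) := (wt_single _ _).symm
    _ ≤ wt (d - Finsupp.single i (d i)) + wt (Finsupp.single i (d i)) := Nat.le_add_left _ _
    _ = wt d := by rw [← wt_add, hd]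

lemma Dmono (hp0 : 0 < p)
    (D : Derivation (ZMod p) (MvPolynomial (Fin p) (ZMod p)) (MvPolynomial (Fin p) (ZMod p)))
    (hD1 : D (X (⟨0, hp0⟩ : Fin p)) = 0)
    (hDk : ∀ j : Fin p, j.val ≠ 0 →
      D (X j) = C ((1 : ZMod p) - ((j.val : ZMod p) + 1)) * X (pre j))
    (s : Fin p →₀ ℕ) :
    D (monomial s (1 : ZMod p)) =
      ∑ i ∈ s.support,
        monomial (s - Finsupp.single i 1 + Finsupp.single (pre i) 1)
          ((s i : ZMod p) * ((1 : ZMod p) - ((i.val : ZMod p) + 1))) := by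
  have hDe : D = mkDerivation (ZMod p) (fun i => D (X i)) :=
    derivation_ext fun i => by rw [mkDerivation_X]
  rw [hDe, mkDerivation_monomial, one_smul, Finsupp.sum]
  refine Finset.sum_congr rfl fun i hi => ?_
  by_cases h0 : i.val = 0
  · have hi0 : i = (⟨0, hp0⟩ : Fin p) := Fin.ext h0
    rw [hi0, hD1, smul_zero]
    simp
  · rw [hDk i h0, smul_eq_mul, X, C_apply, monomial_mul, monomial_mul]
    congr 1
    · rw [zero_add]
    · ring

end AuxModpDeriv

open AuxModpDeriv in
lemma forward_aux (p : ℕ) (hp : p.Prime)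
    (D : Derivation (ZMod p) (MvPolynomial (Fin p) (ZMod p)) (MvPolynomial (Fin p) (ZMod p)))
    (hD1 : D (X (⟨0, hp.pos⟩ : Fin p)) = 0)
    (hDk : ∀ j : Fin p, j.val ≠ 0 →
      D (X j) = C ((1 : ZMod p) - ((j.val : ZMod p) + 1)) *
        X (⟨j.val - 1, lt_of_le_of_lt (Nat.sub_le j.val 1) j.isLt⟩ : Fin p)) :
    Submodule.map D.toLinearMap
        (weightedHomogeneousSubmodule (ZMod p) (fun j : Fin p => j.val + 1) (p + 1))
      ≤ Submodule.span (ZMod p)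
          { f : MvPolynomial (Fin p) (ZMod p) |
            ∃ d : Fin p →₀ ℕ,
              Finsupp.weight (fun j : Fin p => j.val + 1) d = p ∧
              d ≠ Finsupp.single (⟨p - 1, Nat.sub_lt hp.pos Nat.one_pos⟩ : Fin p) 1 ∧
              f = monomial d 1 } := by
  have hp0 := hp.pos
  have hp2 := hp.two_le
  rintro g ⟨f, hf, rfl⟩
  have hf' : IsWeightedHomogeneous (fun j : Fin p => j.val + 1) f (p + 1) := hf
  show D f ∈ _
  have hrepr : D f = ∑ d ∈ f.support, D (monomial d (coeff d f)) := by
    conv_lhs => rw [← support_sum_monomial_coeff f]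
    rw [map_sum]
  rw [hrepr]
  apply Submodule.sum_mem
  intro d hd
  have hwt : wt d = p + 1 := hf' (MvPolynomial.mem_support_iff.1 hd)
  have h1 : monomial d (coeff d f) = (coeff d f) • monomial d (1 : ZMod p) := by
    rw [smul_monomial, smul_eq_mul, mul_one]
  rw [h1, Derivation.map_smul]
  apply Submodule.smul_mem
  rw [Dmono hp0 D hD1 hDk d]
  apply Submodule.sum_mem
  intro i hi
  by_cases h0 : i.val = 0
  · have : ((i.val : ZMod p) : ZMod p) = 0 := by rw [h0]; norm_num
    simp [h0]
  · have hw : wt (d - Finsupp.single i 1 + Finsupp.single (pre i) 1) = p := by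
      have := wt_move h0 (Finsupp.mem_support_iff.1 hi)
      omega
    have hne := move_ne_top (d := d) (i := i) hp2 h0
    have h2 : monomial (d - Finsupp.single i 1 + Finsupp.single (pre i) 1)
        ((d i : ZMod p) * ((1 : ZMod p) - ((i.val : ZMod p) + 1)))
        = ((d i : ZMod p) * ((1 : ZMod p) - ((i.val : ZMod p) + 1))) •
          monomial (d - Finsupp.single i 1 + Finsupp.single (pre i) 1) (1 : ZMod p) := by
      rw [smul_monomial, smul_eq_mul, mul_one]
    rw [h2]
    exact Submodule.smul_mem _ _ (Submodule.subset_span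
      ⟨d - Finsupp.single i 1 + Finsupp.single (pre i) 1, hw, hne, rfl⟩)

namespace AuxModpDeriv

set_option maxHeartbeats 1000000 in
lemma backward_key (p : ℕ) (hp : p.Prime) (hodd : Odd p)
    (D : Derivation (ZMod p) (MvPolynomial (Fin p) (ZMod p)) (MvPolynomial (Fin p) (ZMod p)))
    (hD1 : D (X (⟨0, hp.pos⟩ : Fin p)) = 0)
    (hDk : ∀ j : Fin p, j.val ≠ 0 →
      D (X j) = C ((1 : ZMod p) - ((j.val : ZMod p) + 1)) *
        X (⟨j.val - 1, lt_of_le_of_lt (Nat.sub_le j.val 1) j.isLt⟩ : Fin p)) :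
    ∀ (n : ℕ) (d : Fin p →₀ ℕ), meas d = n → wt d = p →
      d ≠ Finsupp.single (⟨p - 1, Nat.sub_lt hp.pos Nat.one_pos⟩ : Fin p) 1 →
      monomial d (1 : ZMod p) ∈ Submodule.map D.toLinearMap
        (weightedHomogeneousSubmodule (ZMod p) (fun j : Fin p => j.val + 1) (p + 1)) := by
  haveI := Fact.mk hp
  have hp0 := hp.pos
  have hp2 := hp.two_le
  have hp3 : 3 ≤ p := by
    rcases hodd with ⟨m, hm⟩; omega
  intro n
  induction n using Nat.strong_induction_on with
  | _ n IH =>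
  intro d hmeas hwt hne
  obtain ⟨top, htopdef⟩ : ∃ t : Fin p, t = (⟨p - 1, Nat.sub_lt hp.pos Nat.one_pos⟩ : Fin p) :=
    ⟨_, rfl⟩
  have htopval : top.val = p - 1 := by rw [htopdef]
  rw [← htopdef] at hne
  -- d vanishes at top
  have htop : d top = 0 := by
    by_contra h
    have hle : Finsupp.single top 1 ≤ d := Finsupp.single_le_iff.2 (by omega)
    obtain ⟨et, hetdef⟩ : ∃ x, x = d - Finsupp.single top 1 := ⟨_, rfl⟩
    have hd : et + Finsupp.single top 1 = d := by
      rw [hetdef]; exact tsub_add_cancel_of_le hle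
    have h1 : wt d = wt et + p := by
      conv_lhs => rw [← hd]
      rw [wt_add, wt_single, one_mul, htopval]
      omega
    have h2 : wt et = 0 := by omega
    have h3 : et = 0 := by
      by_contra h3
      obtain ⟨i, hi⟩ := Finsupp.ne_iff.1 h3
      have h4 := wt_term_le et i
      simp only [Finsupp.coe_zero, Pi.zero_apply] at hi
      have h5 : et i * (i.val + 1) = 0 := by omega
      rcases Nat.mul_eq_zero.1 h5 with h6 | h6
      · exact hi h6
      · omega
    rw [h3, zero_add] at hd
    exact hne hd.symm
  by_cases hF : (d.support.filter (fun i => i.val ≠ 0)).Nonempty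
  · -- main case
    obtain ⟨k, hkdef⟩ : ∃ x, x = (d.support.filter (fun i => i.val ≠ 0)).max' hF := ⟨_, rfl⟩
    have hkF : k ∈ d.support.filter (fun i => i.val ≠ 0) := by
      rw [hkdef]; exact (d.support.filter (fun i => i.val ≠ 0)).max'_mem hF
    rw [Finset.mem_filter] at hkF
    have hdk : d k ≠ 0 := Finsupp.mem_support_iff.1 hkF.1
    have hk0 : k.val ≠ 0 := hkF.2
    have hktop : k ≠ top := fun h => hdk (h ▸ htop)
    have hklt : k.val + 1 ≤ p - 1 := by
      have h1 := k.isLt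
      have h2 : k.val ≠ p - 1 := fun h => hktop (Fin.ext (by rw [h, htopval]))
      omega
    obtain ⟨k', hk'def⟩ : ∃ x : Fin p, x = (⟨k.val + 1, by omega⟩ : Fin p) := ⟨_, rfl⟩
    have hk'val : k'.val = k.val + 1 := by rw [hk'def]
    have hkk' : k ≠ k' := fun h => by
      have := congrArg Fin.val h; omega
    obtain ⟨e, hedef⟩ : ∃ x, x = d - Finsupp.single k 1 := ⟨_, rfl⟩
    have hed : e + Finsupp.single k 1 = d := by
      rw [hedef]; exact sub_add_cancel_of_pos hdk
    obtain ⟨μ, hμdef⟩ : ∃ x, x = e + Finsupp.single k' 1 := ⟨_, rfl⟩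
    have hwte : wt e + (k.val + 1) = p := by
      conv_rhs => rw [← hwt, ← hed]
      rw [wt_add, wt_single, one_mul]
    have hwtμ : wt μ = p + 1 := by
      rw [hμdef, wt_add, wt_single, one_mul, hk'val]
      omega
    have hek' : e k' = d k' := by
      rw [hedef, Finsupp.tsub_apply, Finsupp.single_apply, if_neg hkk', Nat.sub_zero]
    have hμk' : μ k' = d k' + 1 := by
      rw [hμdef, Finsupp.add_apply, Finsupp.single_eq_same, hek']
    have hdk'lt : d k' + 1 < p := by
      have h1 := wt_term_le d k'
      rw [hwt] at h1
      have h2 : 3 ≤ k'.val + 1 := by omega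
      have h3 : d k' * 3 ≤ d k' * (k'.val + 1) := Nat.mul_le_mul_left _ h2
      omega
    have hcast1 : ((d k' + 1 : ℕ) : ZMod p) ≠ 0 := by
      intro h
      rw [ZMod.natCast_eq_zero_iff] at h
      have := Nat.le_of_dvd (by omega) h
      omega
    have hcast2 : ((1 : ZMod p) - ((k'.val : ZMod p) + 1)) ≠ 0 := by
      intro h
      have h2 : ((k'.val : ℕ) : ZMod p) = 0 := by linear_combination -h
      rw [ZMod.natCast_eq_zero_iff] at h2
      have h3 := Nat.le_of_dvd (by omega) h2
      have := k'.isLt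
      omega
    have hc0 : ((d k' + 1 : ℕ) : ZMod p) * ((1 : ZMod p) - ((k'.val : ZMod p) + 1)) ≠ 0 :=
      mul_ne_zero hcast1 hcast2
    have hk'mem : k' ∈ μ.support := Finsupp.mem_support_iff.2 (by rw [hμk']; omega)
    have hsplit : D (monomial μ (1 : ZMod p)) =
        monomial (μ - Finsupp.single k' 1 + Finsupp.single (pre k') 1)
          ((μ k' : ZMod p) * ((1 : ZMod p) - ((k'.val : ZMod p) + 1))) +
        ∑ i ∈ μ.support.erase k',
          monomial (μ - Finsupp.single i 1 + Finsupp.single (pre i) 1)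
            ((μ i : ZMod p) * ((1 : ZMod p) - ((i.val : ZMod p) + 1))) := by
      rw [Dmono hp0 D hD1 hDk μ]
      exact (Finset.add_sum_erase _ (fun i =>
        monomial (μ - Finsupp.single i 1 + Finsupp.single (pre i) 1)
          ((μ i : ZMod p) * ((1 : ZMod p) - ((i.val : ZMod p) + 1)))) hk'mem).symm
    have hprek' : pre k' = k := by
      apply Fin.ext
      have h1 : (pre k').val = k'.val - 1 := rfl
      omega
    have hmain : μ - Finsupp.single k' 1 + Finsupp.single (pre k') 1 = d := by
      rw [hprek', hμdef, add_tsub_cancel_right, hed]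
    have hTmem : ∀ i ∈ μ.support.erase k',
        monomial (μ - Finsupp.single i 1 + Finsupp.single (pre i) 1)
          ((μ i : ZMod p) * ((1 : ZMod p) - ((i.val : ZMod p) + 1)))
          ∈ Submodule.map D.toLinearMap
            (weightedHomogeneousSubmodule (ZMod p) (fun j : Fin p => j.val + 1) (p + 1)) := by
      intro i hi
      rw [Finset.mem_erase] at hi
      obtain ⟨hik', hisup⟩ := hi
      have hμi : μ i ≠ 0 := Finsupp.mem_support_iff.1 hisup
      by_cases h0 : i.val = 0
      · rw [show ((1 : ZMod p) - ((i.val : ZMod p) + 1)) = 0 by rw [h0]; push_cast; ring]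
        rw [mul_zero, monomial_zero]
        exact Submodule.zero_mem _
      · have hei : e i ≠ 0 := by
          have h1 : μ i = e i := by
            rw [hμdef, Finsupp.add_apply, Finsupp.single_apply, if_neg (fun h => hik' h.symm),
              add_zero]
          rwa [h1] at hμi
        have hdi : d i ≠ 0 := by
          have h1 : e i ≤ d i := by
            rw [hedef, Finsupp.tsub_apply]
            omega
          omega
        have hiF : i ∈ d.support.filter (fun i => i.val ≠ 0) :=
          Finset.mem_filter.2 ⟨Finsupp.mem_support_iff.2 hdi, h0⟩
        have hik : i.val ≤ k.val := by
          have := (d.support.filter (fun i => i.val ≠ 0)).le_max' i hiF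
          rw [← hkdef] at this
          exact this
        obtain ⟨e', he'def⟩ : ∃ x, x = e - Finsupp.single i 1 := ⟨_, rfl⟩
        have hee : e' + Finsupp.single i 1 = e := by
          rw [he'def]; exact sub_add_cancel_of_pos hei
        have hμalt : μ = (e' + Finsupp.single k' 1) + Finsupp.single i 1 := by
          rw [hμdef, ← hee, add_right_comm]
        have hν : μ - Finsupp.single i 1 + Finsupp.single (pre i) 1
            = e' + Finsupp.single k' 1 + Finsupp.single (pre i) 1 := by
          rw [hμalt, add_tsub_cancel_right]
        have hd2 : d = (e' + Finsupp.single k 1) + Finsupp.single i 1 := by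
          rw [← hed, ← hee, add_right_comm]
        have hmd : meas d = meas e' + mf p k.val + mf p i.val := by
          rw [hd2, meas_add, meas_add, meas_single, meas_single, one_mul, one_mul]
        have hmν : meas (μ - Finsupp.single i 1 + Finsupp.single (pre i) 1)
            = meas e' + mf p k'.val + mf p (i.val - 1) := by
          rw [hν, meas_add, meas_add, meas_single, meas_single, one_mul, one_mul]
          have hpi : (pre i).val = i.val - 1 := rfl
          rw [hpi]
        have hlt : meas (μ - Finsupp.single i 1 + Finsupp.single (pre i) 1) < n := by
          rw [hk'val] at hmν
          rw [← hmeas, hmd, hmν]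
          have := mf_lt (p := p) (Nat.one_le_iff_ne_zero.2 h0) hik hklt hp2
          omega
        have hwν : wt (μ - Finsupp.single i 1 + Finsupp.single (pre i) 1) = p := by
          have := wt_move h0 hμi
          omega
        have hνne : μ - Finsupp.single i 1 + Finsupp.single (pre i) 1
            ≠ Finsupp.single (⟨p - 1, Nat.sub_lt hp.pos Nat.one_pos⟩ : Fin p) 1 :=
          move_ne_top hp2 h0
        have hIH := IH _ hlt (μ - Finsupp.single i 1 + Finsupp.single (pre i) 1) rfl hwν hνne
        have heq : monomial (μ - Finsupp.single i 1 + Finsupp.single (pre i) 1)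
            ((μ i : ZMod p) * ((1 : ZMod p) - ((i.val : ZMod p) + 1)))
            = ((μ i : ZMod p) * ((1 : ZMod p) - ((i.val : ZMod p) + 1))) •
              monomial (μ - Finsupp.single i 1 + Finsupp.single (pre i) 1) (1 : ZMod p) := by
          rw [smul_monomial, smul_eq_mul, mul_one]
        rw [heq]
        exact Submodule.smul_mem _ _ hIH
    have hDmem : D (monomial μ (1 : ZMod p)) ∈ Submodule.map D.toLinearMap
        (weightedHomogeneousSubmodule (ZMod p) (fun j : Fin p => j.val + 1) (p + 1)) :=
      ⟨monomial μ 1, isWeightedHomogeneous_monomial _ _ _ hwtμ, rfl⟩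
    have hsummem : (∑ i ∈ μ.support.erase k',
        monomial (μ - Finsupp.single i 1 + Finsupp.single (pre i) 1)
          ((μ i : ZMod p) * ((1 : ZMod p) - ((i.val : ZMod p) + 1))))
          ∈ Submodule.map D.toLinearMap
            (weightedHomogeneousSubmodule (ZMod p) (fun j : Fin p => j.val + 1) (p + 1)) :=
      Submodule.sum_mem _ hTmem
    have hdc0 : monomial d (((d k' + 1 : ℕ) : ZMod p)
        * ((1 : ZMod p) - ((k'.val : ZMod p) + 1)))
        ∈ Submodule.map D.toLinearMap
          (weightedHomogeneousSubmodule (ZMod p) (fun j : Fin p => j.val + 1) (p + 1)) := by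
      have heq : monomial d (((d k' + 1 : ℕ) : ZMod p)
          * ((1 : ZMod p) - ((k'.val : ZMod p) + 1)))
          = D (monomial μ (1 : ZMod p)) - ∑ i ∈ μ.support.erase k',
            monomial (μ - Finsupp.single i 1 + Finsupp.single (pre i) 1)
              ((μ i : ZMod p) * ((1 : ZMod p) - ((i.val : ZMod p) + 1))) := by
        rw [hsplit, hmain, hμk', add_sub_cancel_right]
      rw [heq]
      exact Submodule.sub_mem _ hDmem hsummem
    have hfinal : monomial d (1 : ZMod p)
        = (((d k' + 1 : ℕ) : ZMod p) * ((1 : ZMod p) - ((k'.val : ZMod p) + 1)))⁻¹ •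
          monomial d (((d k' + 1 : ℕ) : ZMod p) * ((1 : ZMod p) - ((k'.val : ZMod p) + 1))) := by
      rw [smul_monomial, smul_eq_mul, inv_mul_cancel₀ hc0]
    rw [hfinal]
    exact Submodule.smul_mem _ _ hdc0
  · -- base case : d = single 0 p, i.e. X_1^p
    rw [Finset.not_nonempty_iff_eq_empty] at hF
    obtain ⟨zero, hzdef⟩ : ∃ x : Fin p, x = (⟨0, hp0⟩ : Fin p) := ⟨_, rfl⟩
    have hzval : zero.val = 0 := by rw [hzdef]
    have hsub : d.support ⊆ {zero} := by
      intro i hi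
      have h0 : i.val = 0 := by
        by_contra h0
        have : i ∈ d.support.filter (fun i => i.val ≠ 0) := Finset.mem_filter.2 ⟨hi, h0⟩
        rw [hF] at this
        exact absurd this (Finset.notMem_empty _)
      exact Finset.mem_singleton.2 (Fin.ext (by rw [h0, hzval]))
    have hd0 : d = Finsupp.single zero (d zero) := Finsupp.support_subset_singleton.1 hsub
    have hdz : d zero = p := by
      have h1 : wt d = d zero * (zero.val + 1) := by conv_lhs => rw [hd0, wt_single]
      rw [hwt, hzval] at h1
      omega
    have hdval : d = Finsupp.single zero p := by rw [hd0, hdz]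
    obtain ⟨one, hodef⟩ : ∃ x : Fin p, x = (⟨1, by omega⟩ : Fin p) := ⟨_, rfl⟩
    have honeval : one.val = 1 := by rw [hodef]
    have hzone : zero ≠ one := fun h => by
      have := congrArg Fin.val h; omega
    obtain ⟨μ₀, hμ₀def⟩ : ∃ x, x = Finsupp.single zero (p - 1) + Finsupp.single one 1 :=
      ⟨_, rfl⟩
    have hwtμ₀ : wt μ₀ = p + 1 := by
      rw [hμ₀def, wt_add, wt_single, wt_single, hzval, honeval]
      omega
    have hμ₀one : μ₀ one = 1 := by
      rw [hμ₀def, Finsupp.add_apply, Finsupp.single_apply, if_neg hzone,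
        Finsupp.single_eq_same]
    have honemem : one ∈ μ₀.support := Finsupp.mem_support_iff.2 (by rw [hμ₀one]; omega)
    have hDval : D (monomial μ₀ (1 : ZMod p)) = monomial d (-1 : ZMod p) := by
      rw [Dmono hp0 D hD1 hDk μ₀, Finset.sum_eq_single one]
      · have hpre1 : pre one = zero := by
          apply Fin.ext
          have h1 : (pre one).val = one.val - 1 := rfl
          omega
        have hν : μ₀ - Finsupp.single one 1 + Finsupp.single (pre one) 1 = d := by
          rw [hpre1, hμ₀def, add_tsub_cancel_right, ← Finsupp.single_add, hdval]
          congr 1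
          omega
        rw [hν, hμ₀one, honeval]
        congr 1
        push_cast
        ring
      · intro b hb hbone
        have hbz : b = zero := by
          have hμ₀b : μ₀ b ≠ 0 := Finsupp.mem_support_iff.1 hb
          by_contra hbz
          rw [hμ₀def, Finsupp.add_apply, Finsupp.single_apply,
            if_neg (fun h => hbz h.symm), Finsupp.single_apply,
            if_neg (fun h => hbone h.symm)] at hμ₀b
          exact hμ₀b rfl
        subst hbz
        rw [show ((b.val : ℕ) : ZMod p) = 0 from by rw [hzval]; push_cast; ring]
        norm_num
      · intro h
        exact absurd honemem h
    refine ⟨(-1 : ZMod p) • monomial μ₀ 1, Submodule.smul_mem _ _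
      (isWeightedHomogeneous_monomial _ _ _ hwtμ₀), ?_⟩
    rw [map_smul]
    show (-1 : ZMod p) • D (monomial μ₀ (1 : ZMod p)) = monomial d 1
    rw [hDval, smul_monomial, smul_eq_mul]
    norm_num

end AuxModpDeriv

/-- Let `p` be an odd prime.  On `𝔽_p[X_1, …, X_p]` (with `X_k` indexed by `k - 1 : Fin p`),
let `D̄` be the (unique) derivation with `D̄(X_1) = 0` and `D̄(X_k) = (1 - k) · X_{k-1}` for
`2 ≤ k ≤ p`, and grade the ring by giving `X_k` the weight `k`.  Then the image under `D̄` of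
the submodule of weighted-homogeneous polynomials of weighted degree `p + 1` is exactly the
`𝔽_p`-span of the weighted-degree-`p` monomials other than `X_p`. -/
theorem image_of_modp_derivation (p : ℕ) (hp : p.Prime) (hodd : Odd p)
    (D : Derivation (ZMod p) (MvPolynomial (Fin p) (ZMod p)) (MvPolynomial (Fin p) (ZMod p)))
    (hD1 : D (X (⟨0, hp.pos⟩ : Fin p)) = 0)
    (hDk : ∀ j : Fin p, j.val ≠ 0 →
      D (X j) = C ((1 : ZMod p) - ((j.val : ZMod p) + 1)) *
        X (⟨j.val - 1, lt_of_le_of_lt (Nat.sub_le j.val 1) j.isLt⟩ : Fin p)) :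
    Submodule.map D.toLinearMap
        (weightedHomogeneousSubmodule (ZMod p) (fun j : Fin p => j.val + 1) (p + 1))
      = Submodule.span (ZMod p)
          { f : MvPolynomial (Fin p) (ZMod p) |
            ∃ d : Fin p →₀ ℕ,
              Finsupp.weight (fun j : Fin p => j.val + 1) d = p ∧
              d ≠ Finsupp.single (⟨p - 1, Nat.sub_lt hp.pos Nat.one_pos⟩ : Fin p) 1 ∧
              f = monomial d 1 } := by
  apply le_antisymm
  · exact forward_aux p hp D hD1 hDk
  · rw [Submodule.span_le]
    rintro f ⟨d, hwt, hne, rfl⟩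
    exact AuxModpDeriv.backward_key p hp hodd D hD1 hDk (AuxModpDeriv.meas d) d rfl hwt hne
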